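/- arXiv:2012.04723 — 7 statements merged into one kernel-verified Lean document; each statement's English description precedes it below -/
import Mathlib

section
/- Let B_ext = ⟨V ∪ V_+, F ∪ F_+, E_ext⟩ be a bipartite graph, B its induced bipartite subgraph on (V, F), and B_+ its induced bipartite subgraph on (V_+, F_+). Let M be a perfect matching of B, M_+ a perfect matching of B_+, and M_ext = M ∪ M_+. Then for all vertices x, y ∈ V ∪ F: if y is reachable from x in the oriented graph G(B, M), then y is reachable from x in the oriented graph G(B_ext, M_ext). (Ancestral relations present in the causal ordering graph of B are also present in the causal ordering graph of B_ext.) -/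
/-- `M` is a perfect matching of the bipartite graph with variable vertices `V`,
equation vertices `F`, and edge set `E` (an edge is a pair `(v, f)` with `v` a
variable vertex and `f` an equation vertex): `M` is a set of edges such that
every vertex of `V ∪ F` is incident to exactly one edge of `M`. -/
def IsPerfectMatching {α : Type*} (V F : Set α) (E M : Set (α × α)) : Prop :=
  M ⊆ E ∧ ∀ x ∈ V ∪ F, ∃! e : α × α, e ∈ M ∧ (e.1 = x ∨ e.2 = x)

/-- The directed edge relation of the oriented graph `G(B, M)`: an edge
`(v − f) ∈ E` is oriented as `f → v` if `(v − f) ∈ M`, and as `v → f` otherwise. -/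
def OStep {α : Type*} (E M : Set (α × α)) (x y : α) : Prop :=
  ((x, y) ∈ E ∧ (x, y) ∉ M) ∨ ((y, x) ∈ E ∧ (y, x) ∈ M)

/-- `y` is reachable from `x` in `G(B, M)`: there is a directed path
(possibly of length zero) from `x` to `y`. -/
def Reach {α : Type*} (E M : Set (α × α)) (x y : α) : Prop :=
  Relation.ReflTransGen (OStep E M) x y

/-- Reachability (ancestral relations) in `G(B, M)` between vertices of
`V ∪ F` is preserved in `G(B_ext, M ∪ M₊)`. -/
theorem reach_preserved_under_extension {α : Type*}
    (V Vp F Fp : Set α)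
    (hVfin : V.Finite) (hVpfin : Vp.Finite) (hFfin : F.Finite) (hFpfin : Fp.Finite)
    (hVVp : Disjoint V Vp) (hFFp : Disjoint F Fp)
    (hVF : Disjoint (V ∪ Vp) (F ∪ Fp))
    (Eext : Set (α × α))
    (hE : ∀ e ∈ Eext, e.1 ∈ V ∪ Vp ∧ e.2 ∈ F ∪ Fp)
    (M Mp : Set (α × α))
    (hM : IsPerfectMatching V F {e ∈ Eext | e.1 ∈ V ∧ e.2 ∈ F} M)
    (hMp : IsPerfectMatching Vp Fp {e ∈ Eext | e.1 ∈ Vp ∧ e.2 ∈ Fp} Mp) :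
    ∀ x ∈ V ∪ F, ∀ y ∈ V ∪ F,
      Reach {e ∈ Eext | e.1 ∈ V ∧ e.2 ∈ F} M x y → Reach Eext (M ∪ Mp) x y := by
  intro x _ y _ h
  refine Relation.ReflTransGen.mono ?_ x y h
  rintro a b (⟨⟨he, haV, hbF⟩, hnm⟩ | ⟨⟨he, hV, hF⟩, hm⟩)
  · refine Or.inl ⟨he, ?_⟩
    rintro (h | h)
    · exact hnm h
    · exact Set.disjoint_left.mp hVVp haV (hMp.1 h).2.1
  · exact Or.inr ⟨he, Or.inl hm⟩
end

section
/- Let B_ext = ⟨V ∪ V_+, F ∪ F_+, E_ext⟩ be a bipartite graph, B its induced bipartite subgraph on (V, F), and B_+ its induced bipartite subgraph on (V_+, F_+). Let M be a perfect matching of B, M_+ a perfect matching of B_+, and M_ext = M ∪ M_+. Then for all vertices x, y ∈ V ∪ F: if x and y are mutually reachable in the oriented graph G(B, M) (i.e., lie in the same strongly connected component), then x and y are mutually reachable in the oriented graph G(B_ext, M_ext). (Every cluster of the causal ordering graph of B is contained in a cluster of the causal ordering graph of B_ext.) -/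
/-- Mutual reachability (lying in the same strongly connected component)
in `G(B, M)` between vertices of `V ∪ F` is preserved in `G(B_ext, M ∪ M₊)`; every
cluster of the causal ordering graph of `B` is contained in a cluster of the causal
ordering graph of `B_ext`. -/
theorem mutual_reach_preserved_under_extension {α : Type*}
    (V Vp F Fp : Set α)
    (hVfin : V.Finite) (hVpfin : Vp.Finite) (hFfin : F.Finite) (hFpfin : Fp.Finite)
    (hVVp : Disjoint V Vp) (hFFp : Disjoint F Fp)
    (hVF : Disjoint (V ∪ Vp) (F ∪ Fp))
    (Eext : Set (α × α))
    (hE : ∀ e ∈ Eext, e.1 ∈ V ∪ Vp ∧ e.2 ∈ F ∪ Fp)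
    (M Mp : Set (α × α))
    (hM : IsPerfectMatching V F {e ∈ Eext | e.1 ∈ V ∧ e.2 ∈ F} M)
    (hMp : IsPerfectMatching Vp Fp {e ∈ Eext | e.1 ∈ Vp ∧ e.2 ∈ Fp} Mp) :
    ∀ x ∈ V ∪ F, ∀ y ∈ V ∪ F,
      (Reach {e ∈ Eext | e.1 ∈ V ∧ e.2 ∈ F} M x y ∧
       Reach {e ∈ Eext | e.1 ∈ V ∧ e.2 ∈ F} M y x) →
      (Reach Eext (M ∪ Mp) x y ∧ Reach Eext (M ∪ Mp) y x) := by
  have hstep : ∀ a b : α, OStep {e ∈ Eext | e.1 ∈ V ∧ e.2 ∈ F} M a b →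
      OStep Eext (M ∪ Mp) a b := by
    rintro a b (⟨⟨hE', haV, _⟩, hnM⟩ | ⟨hE', hM'⟩)
    · refine Or.inl ⟨hE', ?_⟩
      rintro (h | h)
      · exact hnM h
      · exact absurd (hMp.1 h).2.1 (fun hv => hVVp.ne_of_mem haV hv rfl)
    · exact Or.inr ⟨hE'.1, Or.inl hM'⟩
  intro x _ y _ ⟨h1, h2⟩
  exact ⟨Relation.ReflTransGen.mono hstep _ _ h1, Relation.ReflTransGen.mono hstep _ _ h2⟩
end

section
/- Let B_ext = ⟨V ∪ V_+, F ∪ F_+, E_ext⟩ be a bipartite graph, B its induced bipartite subgraph on (V, F), and B_+ its induced bipartite subgraph on (V_+, F_+). Let M be a perfect matching of B, M_+ a perfect matching of B_+, and M_ext = M ∪ M_+. If no vertex of V_+ is adjacent in B_ext to a vertex of F, then for all vertices x, y ∈ V ∪ F: y is reachable from x in the oriented graph G(B_ext, M_ext) if and only if y is reachable from x in the oriented graph G(B, M). (Ancestral relations among V ∪ F that are absent in the causal ordering graph of B are also absent in the causal ordering graph of B_ext.) -/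
/-- If no vertex of `V₊` is adjacent in `B_ext` to a vertex of `F`, then
for all `x, y ∈ V ∪ F`, `y` is reachable from `x` in `G(B_ext, M ∪ M₊)` if and only if
`y` is reachable from `x` in `G(B, M)`: ancestral relations among `V ∪ F` that are
absent in the causal ordering graph of `B` are also absent for `B_ext`. -/
theorem reach_iff_of_no_adjacency {α : Type*}
    (V Vp F Fp : Set α)
    (hVfin : V.Finite) (hVpfin : Vp.Finite) (hFfin : F.Finite) (hFpfin : Fp.Finite)
    (hVVp : Disjoint V Vp) (hFFp : Disjoint F Fp)
    (hVF : Disjoint (V ∪ Vp) (F ∪ Fp))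
    (Eext : Set (α × α))
    (hE : ∀ e ∈ Eext, e.1 ∈ V ∪ Vp ∧ e.2 ∈ F ∪ Fp)
    (M Mp : Set (α × α))
    (hM : IsPerfectMatching V F {e ∈ Eext | e.1 ∈ V ∧ e.2 ∈ F} M)
    (hMp : IsPerfectMatching Vp Fp {e ∈ Eext | e.1 ∈ Vp ∧ e.2 ∈ Fp} Mp)
    (hadj : ∀ v ∈ Vp, ∀ f ∈ F, (v, f) ∉ Eext) :
    ∀ x ∈ V ∪ F, ∀ y ∈ V ∪ F,
      (Reach Eext (M ∪ Mp) x y ↔ Reach {e ∈ Eext | e.1 ∈ V ∧ e.2 ∈ F} M x y) := by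
  set E' : Set (α × α) := {e ∈ Eext | e.1 ∈ V ∧ e.2 ∈ F} with hE'
  obtain ⟨hMsub, -⟩ := hM
  obtain ⟨hMpsub, -⟩ := hMp
  -- membership facts
  have hMmem : ∀ e ∈ M, e.1 ∈ V ∧ e.2 ∈ F := fun e he => (hMsub he).2
  have hMpmem : ∀ e ∈ Mp, e.1 ∈ Vp ∧ e.2 ∈ Fp := fun e he => (hMpsub he).2
  -- once in Vp ∪ Fp, you stay there
  have stuck_step : ∀ z w, z ∈ Vp ∪ Fp → OStep Eext (M ∪ Mp) z w → w ∈ Vp ∪ Fp := by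
    intro z w hz hstep
    rcases hstep with ⟨hE1, -⟩ | ⟨hE2, hM2⟩
    · have hz' := (hE _ hE1).1
      have hzVp : z ∈ Vp := by
        rcases hz' with h | h
        · exact absurd h (fun hV => by
            rcases hz with h' | h'
            · exact hVVp.ne_of_mem hV h' rfl
            · exact hVF.ne_of_mem (Or.inl hV) (Or.inr h') rfl)
        · exact h
      have hw := (hE _ hE1).2
      rcases hw with h | h
      · exact absurd hE1 (hadj z hzVp w h)
      · exact Or.inr h
    · rcases hM2 with h | h
      · exfalso
        have hzF : z ∈ F := (hMmem _ h).2
        rcases hz with h' | h'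
        · exact hVF.ne_of_mem (Or.inr h') (Or.inl hzF) rfl
        · exact hFFp.ne_of_mem hzF h' rfl
      · exact Or.inl (hMpmem _ h).1
  have stuck : ∀ z w, z ∈ Vp ∪ Fp → Reach Eext (M ∪ Mp) z w → w ∈ Vp ∪ Fp := by
    intro z w hz hr
    induction hr with
    | refl => exact hz
    | tail _ hstep ih => exact stuck_step _ _ ih hstep
  -- steps from V ∪ F: go to V ∪ F along E' M edges, or into Vp ∪ Fp
  have step_case : ∀ x z, x ∈ V ∪ F → OStep Eext (M ∪ Mp) x z →
      (z ∈ V ∪ F ∧ OStep E' M x z) ∨ z ∈ Vp ∪ Fp := by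
    intro x z hx hstep
    rcases hstep with ⟨hE1, hnM⟩ | ⟨hE2, hM2⟩
    · have hxV : x ∈ V := by
        rcases (hE _ hE1).1 with h | h
        · exact h
        · exfalso
          rcases hx with h' | h'
          · exact hVVp.ne_of_mem h' h rfl
          · exact hVF.ne_of_mem (Or.inr h) (Or.inl h') rfl
      rcases (hE _ hE1).2 with h | h
      · exact Or.inl ⟨Or.inr h, Or.inl ⟨⟨hE1, hxV, h⟩, fun hm => hnM (Or.inl hm)⟩⟩
      · exact Or.inr (Or.inr h)
    · rcases hM2 with h | h
      · exact Or.inl ⟨Or.inl (hMmem _ h).1, Or.inr ⟨hMsub h, h⟩⟩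
      · exfalso
        have hxFp : x ∈ Fp := (hMpmem _ h).2
        rcases hx with h' | h'
        · exact hVF.ne_of_mem (Or.inl h') (Or.inr hxFp) rfl
        · exact hFFp.ne_of_mem h' hxFp rfl
  intro x hx y hy
  constructor
  · intro hr
    induction hr using Relation.ReflTransGen.head_induction_on with
    | refl => exact Relation.ReflTransGen.refl
    | head hstep hrest ih =>
      rename_i a c
      rcases step_case a c hx hstep with ⟨hc, hstep'⟩ | hc
      · exact Relation.ReflTransGen.head hstep' (ih hc)
      · exfalso
        have := stuck c y hc hrest
        rcases this with h | h
        · rcases hy with h' | h'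
          · exact hVVp.ne_of_mem h' h rfl
          · exact hVF.ne_of_mem (Or.inr h) (Or.inl h') rfl
        · rcases hy with h' | h'
          · exact hVF.ne_of_mem (Or.inl h') (Or.inr h) rfl
          · exact hFFp.ne_of_mem h' h rfl
  · intro hr
    refine Relation.ReflTransGen.mono ?_ x y hr
    intro a b hstep
    rcases hstep with ⟨hE1, hnM⟩ | ⟨hE2, hM2⟩
    · refine Or.inl ⟨hE1.1, ?_⟩
      rintro (hm | hm)
      · exact hnM hm
      · exact hVVp.ne_of_mem hE1.2.1 (hMpmem _ hm).1 rfl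
    · exact Or.inr ⟨hMsub hM2 |>.1, Or.inl hM2⟩
end

section
/- Let M and M' be two perfect matchings of a bipartite graph B = ⟨V, F, E⟩. If an edge (v−f) ∈ E belongs to the symmetric difference of M and M' (equivalently, the edge is oriented differently in the oriented graphs G(B, M) and G(B, M')), then v and f lie on a common directed cycle in G(B, M), and likewise v and f lie on a common directed cycle in G(B, M'). Consequently, G(B, M) and G(B, M') differ only in the direction of directed cycles. -/
section Aux

variable {α : Type*} {V F : Set α} {E M : Set (α × α)}

open Classical in
/-- the `M`-partner of a variable vertex -/
noncomputable def pV (M : Set (α × α)) (x : α) : α :=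
  if h : ∃ g, (x, g) ∈ M then h.choose else x

open Classical in
/-- the `M`-partner of an equation vertex -/
noncomputable def pF (M : Set (α × α)) (y : α) : α :=
  if h : ∃ w, (w, y) ∈ M then h.choose else y

lemma pV_spec (hVF : Disjoint V F) (hE : ∀ e ∈ E, e.1 ∈ V ∧ e.2 ∈ F)
    (hM : IsPerfectMatching V F E M) {x : α} (hx : x ∈ V) :
    (x, pV M x) ∈ M ∧ ∀ g, (x, g) ∈ M → g = pV M x := by
  obtain ⟨hME, huniq⟩ := hM
  obtain ⟨e, ⟨heM, hex⟩, hu⟩ := huniq x (Or.inl hx)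
  have he1 : e.1 = x := by
    rcases hex with h | h
    · exact h
    · exact absurd (h ▸ (hE e (hME heM)).2) (Set.disjoint_left.mp hVF hx)
  have hxM : (x, e.2) ∈ M := by rw [← he1]; exact heM
  have hex' : ∃ g, (x, g) ∈ M := ⟨e.2, hxM⟩
  have hpv : pV M x = hex'.choose := dif_pos hex'
  have hch : (x, hex'.choose) ∈ M := hex'.choose_spec
  have huniq' : ∀ g, (x, g) ∈ M → g = pV M x := by
    intro g hg
    have h1 := hu (x, g) ⟨hg, Or.inl rfl⟩
    have h2 := hu (x, hex'.choose) ⟨hch, Or.inl rfl⟩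
    rw [hpv]
    have := h1.trans h2.symm
    exact congrArg Prod.snd this
  exact ⟨by rw [← huniq' e.2 hxM]; exact hxM, huniq'⟩

lemma pF_spec (hVF : Disjoint V F) (hE : ∀ e ∈ E, e.1 ∈ V ∧ e.2 ∈ F)
    (hM : IsPerfectMatching V F E M) {y : α} (hy : y ∈ F) :
    (pF M y, y) ∈ M ∧ ∀ w, (w, y) ∈ M → w = pF M y := by
  obtain ⟨hME, huniq⟩ := hM
  obtain ⟨e, ⟨heM, hex⟩, hu⟩ := huniq y (Or.inr hy)
  have he2 : e.2 = y := by
    rcases hex with h | h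
    · exact absurd (h ▸ (hE e (hME heM)).1) (Set.disjoint_right.mp hVF hy)
    · exact h
  have hyM : (e.1, y) ∈ M := by rw [← he2]; exact heM
  have hex' : ∃ w, (w, y) ∈ M := ⟨e.1, hyM⟩
  have hpf : pF M y = hex'.choose := dif_pos hex'
  have hch : (hex'.choose, y) ∈ M := hex'.choose_spec
  have huniq' : ∀ w, (w, y) ∈ M → w = pF M y := by
    intro w hw
    have h1 := hu (w, y) ⟨hw, Or.inr rfl⟩
    have h2 := hu (hex'.choose, y) ⟨hch, Or.inr rfl⟩
    rw [hpf]
    exact congrArg Prod.fst (h1.trans h2.symm)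
  exact ⟨by rw [← huniq' e.1 hyM]; exact hyM, huniq'⟩

/-- If `(v,f) ∈ M \ M'`, there is a directed path from `v` to `f` in `G(B,M)`. -/
lemma keyA (V F : Set α) (hVfin : V.Finite) (hVF : Disjoint V F)
    (E : Set (α × α)) (hE : ∀ e ∈ E, e.1 ∈ V ∧ e.2 ∈ F)
    (M M' : Set (α × α))
    (hM : IsPerfectMatching V F E M) (hM' : IsPerfectMatching V F E M')
    (v f : α) (h1 : (v, f) ∈ M) (h2 : (v, f) ∉ M') :
    Relation.TransGen (OStep E M) v f := by
  by_contra hcon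
  have hvV : v ∈ V := (hE _ (hM.1 h1)).1
  have hfF : f ∈ F := (hE _ (hM.1 h1)).2
  set σ : α → α := fun w => pF M (pV M' w) with hσ
  set R : Set α := {w | w ∈ V ∧ Relation.ReflTransGen (OStep E M) v w} with hR
  have hRV : R ⊆ V := fun w hw => hw.1
  have hRfin : R.Finite := hVfin.subset hRV
  have hvR : v ∈ R := ⟨hvV, Relation.ReflTransGen.refl⟩
  -- no vertex of R has M'-partner f
  have step0 : ∀ w ∈ R, pV M' w ≠ f := by
    rintro w ⟨hwV, hreach⟩ heq
    have hwf : (w, f) ∈ M' := by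
      have := (pV_spec hVF hE hM' hwV).1; rwa [heq] at this
    have hwv : w ≠ v := fun h => h2 (h ▸ hwf)
    have hwfM : (w, f) ∉ M := by
      intro hmem
      exact hwv ((((pF_spec hVF hE hM hfF).2 w hmem)).trans
        ((pF_spec hVF hE hM hfF).2 v h1).symm)
    exact hcon (Relation.TransGen.tail' hreach (Or.inl ⟨hM'.1 hwf, hwfM⟩))
  -- σ maps R into R
  have hmaps : Set.MapsTo σ R R := by
    rintro w ⟨hwV, hreach⟩
    have hwg : (w, pV M' w) ∈ M' := (pV_spec hVF hE hM' hwV).1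
    have hgE : (w, pV M' w) ∈ E := hM'.1 hwg
    have hgF : pV M' w ∈ F := (hE _ hgE).2
    have hw'g : (pF M (pV M' w), pV M' w) ∈ M := (pF_spec hVF hE hM hgF).1
    have hw'V : pF M (pV M' w) ∈ V := (hE _ (hM.1 hw'g)).1
    have hσw : σ w = pF M (pV M' w) := rfl
    by_cases hwgM : (w, pV M' w) ∈ M
    · have heq : σ w = w := by
        rw [hσw]; exact ((pF_spec hVF hE hM hgF).2 w hwgM).symm
      rw [heq]; exact ⟨hwV, hreach⟩
    · rw [hσw]
      refine ⟨hw'V, (hreach.tail (Or.inl ⟨hgE, hwgM⟩)).tail ?_⟩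
      exact Or.inr ⟨hM.1 hw'g, hw'g⟩
  -- σ is injective on V
  have hinj : ∀ w₁ ∈ V, ∀ w₂ ∈ V, σ w₁ = σ w₂ → w₁ = w₂ := by
    intro w₁ hw₁ w₂ hw₂ h
    have hg₁ : (w₁, pV M' w₁) ∈ M' := (pV_spec hVF hE hM' hw₁).1
    have hg₂ : (w₂, pV M' w₂) ∈ M' := (pV_spec hVF hE hM' hw₂).1
    have hgF₁ : pV M' w₁ ∈ F := (hE _ (hM'.1 hg₁)).2
    have hgF₂ : pV M' w₂ ∈ F := (hE _ (hM'.1 hg₂)).2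
    have hp₁ : (pF M (pV M' w₁), pV M' w₁) ∈ M := (pF_spec hVF hE hM hgF₁).1
    have hp₂ : (pF M (pV M' w₂), pV M' w₂) ∈ M := (pF_spec hVF hE hM hgF₂).1
    have hwV' : pF M (pV M' w₁) ∈ V := (hE _ (hM.1 hp₁)).1
    have heq : pV M' w₁ = pV M' w₂ := by
      have h2' : (pF M (pV M' w₁), pV M' w₂) ∈ M := by
        have : σ w₁ = σ w₂ := h
        simp only [hσ] at this
        rwa [← this] at hp₂
      exact ((pV_spec hVF hE hM hwV').2 _ hp₁).trans
        ((pV_spec hVF hE hM hwV').2 _ h2').symm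
    have hg₂' : (w₂, pV M' w₁) ∈ M' := heq ▸ hg₂
    exact ((pF_spec hVF hE hM' hgF₁).2 w₁ hg₁).trans
      ((pF_spec hVF hE hM' hgF₁).2 w₂ hg₂').symm
  -- u := M'-partner of f
  set u := pF M' f with hu
  have huf : (u, f) ∈ M' := (pF_spec hVF hE hM' hfF).1
  have huV : u ∈ V := (hE _ (hM'.1 huf)).1
  have hσu : σ u = v := by
    have h1' : pV M' u = f := ((pV_spec hVF hE hM' huV).2 f huf).symm
    simp only [hσ, h1']
    exact ((pF_spec hVF hE hM hfF).2 v h1).symm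
  have huR : u ∉ R := by
    intro huR
    exact step0 u huR (((pV_spec hVF hE hM' huV).2 f huf).symm)
  have hsurj : Set.SurjOn σ R R := by
    rw [Set.Finite.surjOn_iff_bijOn_of_mapsTo hRfin hmaps]
    rw [← Set.Finite.injOn_iff_bijOn_of_mapsTo hRfin hmaps]
    exact fun w₁ hw₁ w₂ hw₂ h => hinj w₁ (hRV hw₁) w₂ (hRV hw₂) h
  obtain ⟨w, hwR, hwv⟩ := hsurj hvR
  exact huR (hinj w (hRV hwR) u huV (hwv.trans hσu.symm) ▸ hwR)

/-- If `(v,f) ∈ M \ M'`, there is a directed path from `f` to `v` in `G(B,M')`. -/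
lemma keyB (V F : Set α) (hFfin : F.Finite) (hVF : Disjoint V F)
    (E : Set (α × α)) (hE : ∀ e ∈ E, e.1 ∈ V ∧ e.2 ∈ F)
    (M M' : Set (α × α))
    (hM : IsPerfectMatching V F E M) (hM' : IsPerfectMatching V F E M')
    (v f : α) (h1 : (v, f) ∈ M) (h2 : (v, f) ∉ M') :
    Relation.TransGen (OStep E M') f v := by
  by_contra hcon
  have hvV : v ∈ V := (hE _ (hM.1 h1)).1
  have hfF : f ∈ F := (hE _ (hM.1 h1)).2
  set σ : α → α := fun g => pV M (pF M' g) with hσ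
  set R : Set α := {g | g ∈ F ∧ Relation.ReflTransGen (OStep E M') f g} with hR
  have hRF : R ⊆ F := fun g hg => hg.1
  have hRfin : R.Finite := hFfin.subset hRF
  have hfR : f ∈ R := ⟨hfF, Relation.ReflTransGen.refl⟩
  have step0 : ∀ g ∈ R, pF M' g ≠ v := by
    rintro g ⟨hgF, hreach⟩ heq
    have hvg : (v, g) ∈ M' := by
      have := (pF_spec hVF hE hM' hgF).1; rwa [heq] at this
    exact hcon (Relation.TransGen.tail' hreach (Or.inr ⟨hM'.1 hvg, hvg⟩))
  have hmaps : Set.MapsTo σ R R := by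
    rintro g ⟨hgF, hreach⟩
    have hwg : (pF M' g, g) ∈ M' := (pF_spec hVF hE hM' hgF).1
    have hwE : (pF M' g, g) ∈ E := hM'.1 hwg
    have hwV : pF M' g ∈ V := (hE _ hwE).1
    have hwg' : (pF M' g, pV M (pF M' g)) ∈ M := (pV_spec hVF hE hM hwV).1
    have hg'F : pV M (pF M' g) ∈ F := (hE _ (hM.1 hwg')).2
    have hσg : σ g = pV M (pF M' g) := rfl
    by_cases hgg' : (pF M' g, g) ∈ M
    · have heq : σ g = g := by
        rw [hσg]; exact ((pV_spec hVF hE hM hwV).2 g hgg').symm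
      rw [heq]; exact ⟨hgF, hreach⟩
    · have hnM' : (pF M' g, pV M (pF M' g)) ∉ M' := by
        intro hmem
        have h3 : pV M (pF M' g) = pV M' (pF M' g) := (pV_spec hVF hE hM' hwV).2 _ hmem
        have hg4 : g = pV M' (pF M' g) := (pV_spec hVF hE hM' hwV).2 g hwg
        have he : g = pV M (pF M' g) := hg4.trans h3.symm
        have hpair : ((pF M' g, pV M (pF M' g)) : α × α) = (pF M' g, g) := by rw [← he]
        exact hgg' (hpair ▸ hwg')
      rw [hσg]
      refine ⟨hg'F, (hreach.tail (Or.inr ⟨hwE, hwg⟩)).tail ?_⟩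
      exact Or.inl ⟨hM.1 hwg', hnM'⟩
  have hinj : ∀ g₁ ∈ F, ∀ g₂ ∈ F, σ g₁ = σ g₂ → g₁ = g₂ := by
    intro g₁ hg₁ g₂ hg₂ h
    have hw₁ : (pF M' g₁, g₁) ∈ M' := (pF_spec hVF hE hM' hg₁).1
    have hw₂ : (pF M' g₂, g₂) ∈ M' := (pF_spec hVF hE hM' hg₂).1
    have hwV₁ : pF M' g₁ ∈ V := (hE _ (hM'.1 hw₁)).1
    have hwV₂ : pF M' g₂ ∈ V := (hE _ (hM'.1 hw₂)).1
    have hp₁ : (pF M' g₁, pV M (pF M' g₁)) ∈ M := (pV_spec hVF hE hM hwV₁).1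
    have hp₂ : (pF M' g₂, pV M (pF M' g₂)) ∈ M := (pV_spec hVF hE hM hwV₂).1
    have hg'F : pV M (pF M' g₁) ∈ F := (hE _ (hM.1 hp₁)).2
    have heq : pF M' g₁ = pF M' g₂ := by
      have h2' : (pF M' g₂, pV M (pF M' g₁)) ∈ M := by
        have : σ g₁ = σ g₂ := h
        simp only [hσ] at this
        rwa [← this] at hp₂
      exact ((pF_spec hVF hE hM hg'F).2 _ hp₁).trans
        ((pF_spec hVF hE hM hg'F).2 _ h2').symm
    have hw₂' : (pF M' g₁, g₂) ∈ M' := heq ▸ hw₂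
    exact ((pV_spec hVF hE hM' hwV₁).2 g₁ hw₁).trans
      ((pV_spec hVF hE hM' hwV₁).2 g₂ hw₂').symm
  set f₁ := pV M' v with hf₁
  have hvf₁ : (v, f₁) ∈ M' := (pV_spec hVF hE hM' hvV).1
  have hf₁F : f₁ ∈ F := (hE _ (hM'.1 hvf₁)).2
  have hσf₁ : σ f₁ = f := by
    have h1' : pF M' f₁ = v := ((pF_spec hVF hE hM' hf₁F).2 v hvf₁).symm
    simp only [hσ, h1']
    exact ((pV_spec hVF hE hM hvV).2 f h1).symm
  have hf₁R : f₁ ∉ R := by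
    intro hmem
    exact step0 f₁ hmem (((pF_spec hVF hE hM' hf₁F).2 v hvf₁).symm)
  have hsurj : Set.SurjOn σ R R := by
    rw [Set.Finite.surjOn_iff_bijOn_of_mapsTo hRfin hmaps]
    rw [← Set.Finite.injOn_iff_bijOn_of_mapsTo hRfin hmaps]
    exact fun g₁ hg₁ g₂ hg₂ h => hinj g₁ (hRF hg₁) g₂ (hRF hg₂) h
  obtain ⟨g, hgR, hgf⟩ := hsurj hfR
  exact hf₁R (hinj g (hRF hgR) f₁ hf₁F (hgf.trans hσf₁.symm) ▸ hgR)

end Aux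

/-- If an edge `(v − f) ∈ E` belongs to the symmetric difference of two
perfect matchings `M` and `M'` of `B` (i.e., it is oriented differently in `G(B, M)`
and `G(B, M')`), then `v` and `f` lie on a common directed cycle in `G(B, M)`, and
likewise in `G(B, M')`: the two oriented graphs differ only in the direction of
directed cycles. -/
theorem symmDiff_edge_lies_on_cycle {α : Type*}
    (V F : Set α) (hVfin : V.Finite) (hFfin : F.Finite)
    (hVF : Disjoint V F)
    (E : Set (α × α))
    (hE : ∀ e ∈ E, e.1 ∈ V ∧ e.2 ∈ F)
    (M M' : Set (α × α))
    (hM : IsPerfectMatching V F E M) (hM' : IsPerfectMatching V F E M')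
    (v f : α) (hvf : (v, f) ∈ E)
    (hdiff : ((v, f) ∈ M ∧ (v, f) ∉ M') ∨ ((v, f) ∈ M' ∧ (v, f) ∉ M)) :
    (Relation.TransGen (OStep E M) v f ∧ Relation.TransGen (OStep E M) f v) ∧
    (Relation.TransGen (OStep E M') v f ∧ Relation.TransGen (OStep E M') f v) := by
  rcases hdiff with ⟨h1, h2⟩ | ⟨h1, h2⟩
  · exact ⟨⟨keyA V F hVfin hVF E hE M M' hM hM' v f h1 h2,
      Relation.TransGen.single (Or.inr ⟨hvf, h1⟩)⟩,
      ⟨Relation.TransGen.single (Or.inl ⟨hvf, h2⟩),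
      keyB V F hFfin hVF E hE M M' hM hM' v f h1 h2⟩⟩
  · exact ⟨⟨Relation.TransGen.single (Or.inl ⟨hvf, h2⟩),
      keyB V F hFfin hVF E hE M' M hM' hM v f h1 h2⟩,
      ⟨keyA V F hVfin hVF E hE M' M hM' hM v f h1 h2,
      Relation.TransGen.single (Or.inr ⟨hvf, h1⟩)⟩⟩
end

section
/- Let M and M' be two perfect matchings of a bipartite graph B = ⟨V, F, E⟩. Then for all vertices x, y ∈ V ∪ F: x and y are mutually reachable in the oriented graph G(B, M) if and only if x and y are mutually reachable in the oriented graph G(B, M'). (The segmentation of V ∪ F into strongly connected components of G(B, M) does not depend on the choice of the perfect matching.) -/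
section Aux

variable {α : Type*} {V F : Set α} {E M M' : Set (α × α)}

/-- Every variable vertex is matched. -/
lemma pm_exists_V (hVF : Disjoint V F) (hE : ∀ e ∈ E, e.1 ∈ V ∧ e.2 ∈ F)
    (hM : IsPerfectMatching V F E M) {v : α} (hv : v ∈ V) :
    ∃ f, (v, f) ∈ M := by
  obtain ⟨e, ⟨heM, hx⟩, -⟩ := hM.2 v (Or.inl hv)
  rcases hx with hx | hx
  · exact ⟨e.2, by rw [← hx]; exact heM⟩
  · exact absurd (hx ▸ (hE e (hM.1 heM)).2) (Set.disjoint_left.mp hVF hv)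

/-- Every equation vertex is matched. -/
lemma pm_exists_F (hVF : Disjoint V F) (hE : ∀ e ∈ E, e.1 ∈ V ∧ e.2 ∈ F)
    (hM : IsPerfectMatching V F E M) {f : α} (hf : f ∈ F) :
    ∃ v, (v, f) ∈ M := by
  obtain ⟨e, ⟨heM, hx⟩, -⟩ := hM.2 f (Or.inr hf)
  rcases hx with hx | hx
  · exact absurd (hx ▸ (hE e (hM.1 heM)).1) (Set.disjoint_right.mp hVF hf)
  · exact ⟨e.1, by rw [← hx]; exact heM⟩

/-- Uniqueness of the matched partner of a variable vertex. -/
lemma pm_unique_V (hE : ∀ e ∈ E, e.1 ∈ V ∧ e.2 ∈ F)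
    (hM : IsPerfectMatching V F E M) {v f f' : α}
    (h1 : (v, f) ∈ M) (h2 : (v, f') ∈ M) : f = f' := by
  obtain ⟨e₀, -, hu⟩ := hM.2 v (Or.inl (hE _ (hM.1 h1)).1)
  have h : ((v, f) : α × α) = (v, f') :=
    (hu (v, f) ⟨h1, Or.inl rfl⟩).trans (hu (v, f') ⟨h2, Or.inl rfl⟩).symm
  exact (Prod.ext_iff.mp h).2

/-- Uniqueness of the matched partner of an equation vertex. -/
lemma pm_unique_F (hE : ∀ e ∈ E, e.1 ∈ V ∧ e.2 ∈ F)
    (hM : IsPerfectMatching V F E M) {v v' f : α}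
    (h1 : (v, f) ∈ M) (h2 : (v', f) ∈ M) : v = v' := by
  obtain ⟨e₀, -, hu⟩ := hM.2 f (Or.inr (hE _ (hM.1 h1)).2)
  have h : ((v, f) : α × α) = (v', f) :=
    (hu (v, f) ⟨h1, Or.inr rfl⟩).trans (hu (v', f) ⟨h2, Or.inr rfl⟩).symm
  exact (Prod.ext_iff.mp h).1

open Classical in
/-- Go from a variable vertex to the `M`-partner of its `M'`-partner. -/
noncomputable def gnext (M M' : Set (α × α)) (v : α) : α :=
  if h : ∃ w f, (v, f) ∈ M' ∧ (w, f) ∈ M then h.choose else v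

lemma gnext_spec (hVF : Disjoint V F) (hE : ∀ e ∈ E, e.1 ∈ V ∧ e.2 ∈ F)
    (hM : IsPerfectMatching V F E M) (hM' : IsPerfectMatching V F E M')
    {v : α} (hv : v ∈ V) :
    ∃ f, (v, f) ∈ M' ∧ (gnext M M' v, f) ∈ M := by
  have hex : ∃ w f, (v, f) ∈ M' ∧ (w, f) ∈ M := by
    obtain ⟨f, hf⟩ := pm_exists_V hVF hE hM' hv
    obtain ⟨w, hw⟩ := pm_exists_F hVF hE hM (hE _ (hM'.1 hf)).2
    exact ⟨w, f, hf, hw⟩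
  unfold gnext
  rw [dif_pos hex]
  exact hex.choose_spec

/-- The invariant along the alternating chain: `v` is a variable vertex
whose `M`-edge is not an `M'`-edge. -/
def InvP (V : Set α) (M M' : Set (α × α)) (v : α) : Prop :=
  v ∈ V ∧ ∀ f, (v, f) ∈ M → (v, f) ∉ M'

lemma step_lemma (hVF : Disjoint V F) (hE : ∀ e ∈ E, e.1 ∈ V ∧ e.2 ∈ F)
    (hM : IsPerfectMatching V F E M) (hM' : IsPerfectMatching V F E M')
    {v : α} (h : InvP V M M' v) :
    Reach E M v (gnext M M' v) ∧ InvP V M M' (gnext M M' v) := by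
  obtain ⟨f, hf', hfM⟩ := gnext_spec hVF hE hM hM' h.1
  set w := gnext M M' v with hw
  have hvf_notM : (v, f) ∉ M := fun hc => h.2 f hc hf'
  have s1 : OStep E M v f := Or.inl ⟨hM'.1 hf', hvf_notM⟩
  have s2 : OStep E M f w := Or.inr ⟨hM.1 hfM, hfM⟩
  have hwV : w ∈ V := (hE _ (hM.1 hfM)).1
  refine ⟨Relation.ReflTransGen.head s1 (Relation.ReflTransGen.single s2),
    hwV, fun f' hf'M hf'M' => ?_⟩
  have hff : f' = f := pm_unique_V hE hM hf'M hfM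
  subst hff
  have hwv : w = v := pm_unique_F hE hM' hf'M' hf'
  exact hvf_notM (hwv ▸ hfM)

lemma chain_lemma (hVF : Disjoint V F) (hE : ∀ e ∈ E, e.1 ∈ V ∧ e.2 ∈ F)
    (hM : IsPerfectMatching V F E M) (hM' : IsPerfectMatching V F E M')
    {v : α} (h : InvP V M M' v) (n : ℕ) :
    InvP V M M' ((gnext M M')^[n] v) ∧ Reach E M v ((gnext M M')^[n] v) := by
  induction n with
  | zero => exact ⟨h, Relation.ReflTransGen.refl⟩
  | succ n ih =>
    rw [Function.iterate_succ_apply']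
    obtain ⟨r, hi⟩ := step_lemma hVF hE hM hM' ih.1
    exact ⟨hi, ih.2.trans r⟩

lemma gnext_mapsTo (hVF : Disjoint V F) (hE : ∀ e ∈ E, e.1 ∈ V ∧ e.2 ∈ F)
    (hM : IsPerfectMatching V F E M) (hM' : IsPerfectMatching V F E M') :
    Set.MapsTo (gnext M M') V V := fun v hv => by
  obtain ⟨f, -, h2⟩ := gnext_spec hVF hE hM hM' hv
  exact (hE _ (hM.1 h2)).1

lemma gnext_injOn (hVF : Disjoint V F) (hE : ∀ e ∈ E, e.1 ∈ V ∧ e.2 ∈ F)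
    (hM : IsPerfectMatching V F E M) (hM' : IsPerfectMatching V F E M') :
    Set.InjOn (gnext M M') V := by
  intro v hv w hw he
  obtain ⟨f, h1, h2⟩ := gnext_spec hVF hE hM hM' hv
  obtain ⟨f', h1', h2'⟩ := gnext_spec hVF hE hM hM' hw
  rw [he] at h2
  have hff : f = f' := pm_unique_V hE hM h2 h2'
  subst hff
  exact pm_unique_F hE hM' h1 h1'

/-- If `f` is the `M`-partner of `v` and `w` is the `M'`-partner of `f`
(i.e. `w` is the `gnext`-predecessor of `v`), then `v` reaches `w` in `G(B,M)`. -/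
lemma return_reach (hVfin : V.Finite) (hVF : Disjoint V F)
    (hE : ∀ e ∈ E, e.1 ∈ V ∧ e.2 ∈ F)
    (hM : IsPerfectMatching V F E M) (hM' : IsPerfectMatching V F E M')
    {v w f : α} (hInv : InvP V M M' v) (hvf : (v, f) ∈ M) (hwf : (w, f) ∈ M') :
    Reach E M v w := by
  have hmaps : Set.MapsTo (gnext M M') V V := gnext_mapsTo hVF hE hM hM'
  have hinj : Set.InjOn (gnext M M') V := gnext_injOn hVF hE hM hM'
  have hiterMaps : ∀ n, Set.MapsTo ((gnext M M')^[n]) V V := fun n => hmaps.iterate n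
  have hiterInj : ∀ n, Set.InjOn ((gnext M M')^[n]) V := by
    intro n
    induction n with
    | zero => exact fun a _ b _ h => h
    | succ n ih =>
      rw [Function.iterate_succ]
      exact ih.comp hinj hmaps
  have hvV : v ∈ V := hInv.1
  -- pigeonhole: the orbit of v returns to v
  have hpig : ∃ i ∈ (Set.univ : Set ℕ), ∃ j ∈ (Set.univ : Set ℕ),
      i ≠ j ∧ (gnext M M')^[i] v = (gnext M M')^[j] v := by
    refine Set.infinite_univ.exists_ne_map_eq_of_mapsTo
      (f := fun n : ℕ => (gnext M M')^[n] v) (fun n _ => hiterMaps n hvV) hVfin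
  obtain ⟨i, -, j, -, hij, hval⟩ := hpig
  -- wlog i < j
  have key : ∃ n, 1 ≤ n ∧ (gnext M M')^[n] v = v := by
    rcases hij.lt_or_gt with hlt | hlt
    · refine ⟨j - i, by omega, ?_⟩
      have h1 : (gnext M M')^[i] ((gnext M M')^[j-i] v) = (gnext M M')^[i] v := by
        rw [← Function.iterate_add_apply]
        rw [show i + (j - i) = j by omega]
        exact hval.symm
      exact hiterInj i (hiterMaps (j - i) hvV) hvV h1
    · refine ⟨i - j, by omega, ?_⟩
      have h1 : (gnext M M')^[j] ((gnext M M')^[i-j] v) = (gnext M M')^[j] v := by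
        rw [← Function.iterate_add_apply]
        rw [show j + (i - j) = i by omega]
        exact hval
      exact hiterInj j (hiterMaps (i - j) hvV) hvV h1
  obtain ⟨n, hn1, hnv⟩ := key
  have hgu : gnext M M' ((gnext M M')^[n-1] v) = v := by
    have h := Function.iterate_succ_apply' (gnext M M') (n - 1) v
    rw [show (n - 1).succ = n by omega] at h
    rw [← h]; exact hnv
  obtain ⟨hInvU, hReachU⟩ := chain_lemma hVF hE hM hM' hInv (n - 1)
  obtain ⟨f', h1, h2⟩ := gnext_spec hVF hE hM hM' hInvU.1
  rw [hgu] at h2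
  have hff : f' = f := pm_unique_V hE hM h2 hvf
  subst hff
  have huw : (gnext M M')^[n-1] v = w := pm_unique_F hE hM' h1 hwf
  exact huw ▸ hReachU

/-- Claim A: if `(v,f) ∈ M \ M'`, then `v` reaches `f` in `G(B,M)`. -/
lemma claimA (hVfin : V.Finite) (hVF : Disjoint V F)
    (hE : ∀ e ∈ E, e.1 ∈ V ∧ e.2 ∈ F)
    (hM : IsPerfectMatching V F E M) (hM' : IsPerfectMatching V F E M')
    {v f : α} (hvf : (v, f) ∈ M) (hvf' : (v, f) ∉ M') :
    Reach E M v f := by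
  have hvV : v ∈ V := (hE _ (hM.1 hvf)).1
  have hInv : InvP V M M' v := ⟨hvV, fun f' h1 h2 => by
    have : f' = f := pm_unique_V hE hM h1 hvf
    exact hvf' (this ▸ h2)⟩
  obtain ⟨w, hw⟩ := pm_exists_F hVF hE hM' (hE _ (hM.1 hvf)).2
  have hr : Reach E M v w := return_reach hVfin hVF hE hM hM' hInv hvf hw
  have hwfM : (w, f) ∉ M := fun hc => by
    have : w = v := pm_unique_F hE hM hc hvf
    exact hvf' (this ▸ hw)
  exact hr.tail (Or.inl ⟨hM'.1 hw, hwfM⟩)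

/-- Claim B: if `(v,f) ∈ M' \ M`, then `f` reaches `v` in `G(B,M)`. -/
lemma claimB (hVfin : V.Finite) (hVF : Disjoint V F)
    (hE : ∀ e ∈ E, e.1 ∈ V ∧ e.2 ∈ F)
    (hM : IsPerfectMatching V F E M) (hM' : IsPerfectMatching V F E M')
    {v f : α} (hvf : (v, f) ∈ M') (hvfM : (v, f) ∉ M) :
    Reach E M f v := by
  obtain ⟨v₁, hv₁⟩ := pm_exists_F hVF hE hM (hE _ (hM'.1 hvf)).2
  have s1 : OStep E M f v₁ := Or.inr ⟨hM.1 hv₁, hv₁⟩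
  have hInv : InvP V M M' v₁ := ⟨(hE _ (hM.1 hv₁)).1, fun f' h1 h2 => by
    have hff : f' = f := pm_unique_V hE hM h1 hv₁
    subst hff
    have : v₁ = v := pm_unique_F hE hM' h2 hvf
    exact hvfM (this ▸ hv₁)⟩
  have hr : Reach E M v₁ v := return_reach hVfin hVF hE hM hM' hInv hv₁ hvf
  exact Relation.ReflTransGen.head s1 hr

lemma ostep_to_reach (hVfin : V.Finite) (hVF : Disjoint V F)
    (hE : ∀ e ∈ E, e.1 ∈ V ∧ e.2 ∈ F)
    (hM : IsPerfectMatching V F E M) (hM' : IsPerfectMatching V F E M')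
    {x y : α} (h : OStep E M' x y) : Reach E M x y := by
  rcases h with ⟨hEe, hnM'⟩ | ⟨hEe, hM'e⟩
  · by_cases hxy : (x, y) ∈ M
    · exact claimA hVfin hVF hE hM hM' hxy hnM'
    · exact Relation.ReflTransGen.single (Or.inl ⟨hEe, hxy⟩)
  · by_cases hyx : (y, x) ∈ M
    · exact Relation.ReflTransGen.single (Or.inr ⟨hEe, hyx⟩)
    · exact claimB hVfin hVF hE hM hM' hM'e hyx

lemma reach_mono (hVfin : V.Finite) (hVF : Disjoint V F)
    (hE : ∀ e ∈ E, e.1 ∈ V ∧ e.2 ∈ F)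
    (hM : IsPerfectMatching V F E M) (hM' : IsPerfectMatching V F E M')
    {x y : α} (h : Reach E M' x y) : Reach E M x y := by
  induction h with
  | refl => exact Relation.ReflTransGen.refl
  | tail _ hstep ih => exact ih.trans (ostep_to_reach hVfin hVF hE hM hM' hstep)

end Aux

/-- For any two perfect matchings `M` and `M'` of a bipartite graph `B`,
two vertices `x, y ∈ V ∪ F` are mutually reachable in `G(B, M)` if and only if they
are mutually reachable in `G(B, M')`: the segmentation of `V ∪ F` into strongly
connected components does not depend on the choice of the perfect matching. -/
theorem mutual_reach_independent_of_matching {α : Type*}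
    (V F : Set α) (hVfin : V.Finite) (hFfin : F.Finite)
    (hVF : Disjoint V F)
    (E : Set (α × α))
    (hE : ∀ e ∈ E, e.1 ∈ V ∧ e.2 ∈ F)
    (M M' : Set (α × α))
    (hM : IsPerfectMatching V F E M) (hM' : IsPerfectMatching V F E M') :
    ∀ x ∈ V ∪ F, ∀ y ∈ V ∪ F,
      ((Reach E M x y ∧ Reach E M y x) ↔ (Reach E M' x y ∧ Reach E M' y x)) := by
  intro x _ y _
  constructor
  · rintro ⟨h1, h2⟩
    exact ⟨reach_mono hVfin hVF hE hM' hM h1, reach_mono hVfin hVF hE hM' hM h2⟩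
  · rintro ⟨h1, h2⟩
    exact ⟨reach_mono hVfin hVF hE hM hM' h1, reach_mono hVfin hVF hE hM hM' h2⟩
end

section
/- Let B_ext = ⟨V ∪ V_+, F ∪ F_+, E_ext⟩ be a bipartite graph with V, V_+, F, F_+ pairwise disjoint, and let ℓ : V ∪ V_+ → F ∪ F_+ be a natural labelling, i.e., a bijection with ℓ(V) = F and ℓ(V_+) = F_+. Let B_nat be the bipartite graph obtained from B_ext by adding the diagonal edges (x − ℓ(x)) for all x ∈ V ∪ V_+, and let M_nat = {(x − ℓ(x)) : x ∈ V ∪ V_+} be the corresponding diagonal perfect matching of B_nat. If M_ext is a perfect matching of B_ext that matches some equation f ∈ F to some variable v_+ ∈ V_+, then v_+ and f lie on a common directed cycle in the oriented graph G(B_nat, M_nat); in particular, G(B_nat, M_nat) contains a directed cycle passing through both a vertex of V_+ and a vertex of F (a feedback loop involving both the original model and the extension). -/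
/-- The diagonal edges `(x − ℓ x)` for `x ∈ S`, where `ℓ` is a natural labelling
assigning to each variable its own (equilibrium) equation. -/
def diagEdges {α : Type*} (ℓ : α → α) (S : Set α) : Set (α × α) :=
  {p : α × α | ∃ x ∈ S, p = (x, ℓ x)}

/-- Let `ℓ` be a natural labelling (a bijection mapping `V` onto `F`
and `V₊` onto `F₊`), `B_nat` the bipartite graph obtained from `B_ext` by adding all
diagonal edges `(x − ℓ x)`, and `M_nat` the diagonal perfect matching of `B_nat`.
If a perfect matching `M_ext` of `B_ext` matches some `f ∈ F` to some `v₊ ∈ V₊`,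
then `v₊` and `f` lie on a common directed cycle of `G(B_nat, M_nat)`: there is a
feedback loop involving both the original model and the extension. -/
theorem matched_across_implies_feedback_loop {α : Type*}
    (V Vp F Fp : Set α)
    (hVfin : V.Finite) (hVpfin : Vp.Finite) (hFfin : F.Finite) (hFpfin : Fp.Finite)
    (hVVp : Disjoint V Vp) (hFFp : Disjoint F Fp)
    (hVF : Disjoint (V ∪ Vp) (F ∪ Fp))
    (ℓ : α → α)
    (hℓV : Set.BijOn ℓ V F) (hℓVp : Set.BijOn ℓ Vp Fp)
    (Eext : Set (α × α))
    (hE : ∀ e ∈ Eext, e.1 ∈ V ∪ Vp ∧ e.2 ∈ F ∪ Fp)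
    (Mext : Set (α × α))
    (hMext : IsPerfectMatching (V ∪ Vp) (F ∪ Fp) Eext Mext)
    (vp f : α) (hvp : vp ∈ Vp) (hf : f ∈ F) (hmatch : (vp, f) ∈ Mext) :
    Relation.TransGen
      (OStep (Eext ∪ diagEdges ℓ (V ∪ Vp)) (diagEdges ℓ (V ∪ Vp))) vp f ∧
    Relation.TransGen
      (OStep (Eext ∪ diagEdges ℓ (V ∪ Vp)) (diagEdges ℓ (V ∪ Vp))) f vp := by
  classical
  have hne : Nonempty α := ⟨vp⟩
  set S : Set α := V ∪ Vp with hSdef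
  set T : Set α := F ∪ Fp with hTdef
  set D : Set (α × α) := diagEdges ℓ S with hDdef
  set R : α → α → Prop := OStep (Eext ∪ D) D with hRdef
  -- basic facts
  have hSfin : S.Finite := hVfin.union hVpfin
  have hℓ : Set.BijOn ℓ S T := by
    refine Set.BijOn.union hℓV hℓVp ?_
    intro x hx y hy hxy
    rcases hx with hx | hx <;> rcases hy with hy | hy
    · exact hℓV.injOn hx hy hxy
    · have h2 : ℓ x ∈ Fp := hxy ▸ hℓVp.mapsTo hy
      exact absurd rfl (hFFp.ne_of_mem (hℓV.mapsTo hx) h2)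
    · have h2 : ℓ x ∈ F := hxy ▸ hℓV.mapsTo hy
      exact absurd rfl (hFFp.ne_of_mem h2 (hℓVp.mapsTo hx))
    · exact hℓVp.injOn hx hy hxy
  -- σ : the Mext-partner of a variable
  have hsig : ∀ x ∈ S, ∃ g, (x, g) ∈ Mext ∧ ∀ e ∈ Mext, (e.1 = x ∨ e.2 = x) → e = (x, g) := by
    intro x hx
    obtain ⟨e, ⟨heM, hei⟩, huniq⟩ := hMext.2 x (Or.inl hx)
    have he1 : e.1 = x := by
      rcases hei with h | h
      · exact h
      · exact absurd (h ▸ (hE e (hMext.1 heM)).2) (fun hh => (hVF.ne_of_mem hx hh rfl).elim)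
    refine ⟨e.2, by rwa [← he1, Prod.mk.eta], ?_⟩
    intro e' he'M he'i
    rw [← he1, Prod.mk.eta]
    exact huniq e' ⟨he'M, he'i⟩
  choose! σ hσM hσuniq using hsig
  have hσT : ∀ x ∈ S, σ x ∈ T := fun x hx => (hE _ (hMext.1 (hσM x hx))).2
  -- σ vp = f
  have hσvp : σ vp = f := by
    have := hσuniq vp (Or.inr hvp) (vp, f) hmatch (Or.inl rfl)
    exact (Prod.mk.injEq .. ▸ this).2.symm
  -- π
  set π : α → α := fun x => Function.invFunOn ℓ S (σ x) with hπdef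
  have hexists : ∀ x ∈ S, ∃ a ∈ S, ℓ a = σ x := fun x hx => hℓ.surjOn (hσT x hx)
  have hπS : Set.MapsTo π S S := fun x hx => Function.invFunOn_mem (hexists x hx)
  have hℓπ : ∀ x ∈ S, ℓ (π x) = σ x := fun x hx => Function.invFunOn_eq (hexists x hx)
  have hσinj : Set.InjOn σ S := by
    intro x hx y hy hxy
    obtain ⟨e, -, huniq⟩ := hMext.2 (σ x) (Or.inr (hσT x hx))
    have h1 := huniq (x, σ x) ⟨hσM x hx, Or.inr rfl⟩
    have h2 := huniq (y, σ y) ⟨hσM y hy, Or.inr hxy.symm⟩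
    exact congrArg Prod.fst (h1.trans h2.symm)
  have hπinj : Set.InjOn π S := by
    intro x hx y hy hxy
    apply hσinj hx hy
    rw [← hℓπ x hx, ← hℓπ y hy]
    exact congrArg ℓ hxy
  -- fixed point iff diagonal
  have hfix : ∀ x ∈ S, σ x = ℓ x → π x = x := by
    intro x hx h
    have : π x = Function.invFunOn ℓ S (ℓ x) := by rw [hπdef]; simp [h]
    rw [this]
    exact hℓ.injOn.leftInvOn_invFunOn hx
  have hvpS : vp ∈ S := Or.inr hvp
  have hπvpV : π vp ∈ V := by
    have h1 : π vp ∈ S := hπS hvpS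
    rcases h1 with h | h
    · exact h
    · exact absurd (hℓπ vp hvpS ▸ hℓVp.mapsTo h) (fun hh => (hFFp.ne_of_mem (hσvp ▸ hf) (hσvp ▸ hh) rfl).elim)
  have hπvp_ne : π vp ≠ vp := fun h => hVVp.ne_of_mem (h ▸ hπvpV) hvp h
  -- pigeonhole: ∃ m ≥ 1, π^[m] vp = vp
  have hiter_mem : ∀ n, π^[n] vp ∈ S := fun n => hπS.iterate n hvpS
  obtain ⟨m, hm1, hmvp⟩ : ∃ m, 1 ≤ m ∧ π^[m] vp = vp := by
    haveI : Finite S := hSfin.to_subtype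
    obtain ⟨i, j, hij, heq⟩ := Finite.exists_ne_map_eq_of_infinite
      (fun n : ℕ => (⟨π^[n] vp, hiter_mem n⟩ : S))
    have heq' : π^[i] vp = π^[j] vp := congrArg Subtype.val heq
    rcases hij.lt_or_gt with h | h
    · refine ⟨j - i, by omega, ?_⟩
      have : π^[i] (π^[j - i] vp) = π^[i] vp := by
        rw [← Function.iterate_add_apply]
        rw [Nat.add_sub_cancel' h.le] at *
        exact heq'.symm
      exact hπinj.iterate hπS i (hiter_mem _) hvpS this
    · refine ⟨i - j, by omega, ?_⟩
      have : π^[j] (π^[i - j] vp) = π^[j] vp := by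
        rw [← Function.iterate_add_apply, Nat.add_sub_cancel' h.le]
        exact heq'
      exact hπinj.iterate hπS j (hiter_mem _) hvpS this
  -- no fixed points on the orbit
  have hnofix : ∀ j ≤ m, π (π^[j] vp) ≠ π^[j] vp := by
    intro j hj hfx
    have hstall : ∀ t, π^[j + t] vp = π^[j] vp := by
      intro t
      induction t with
      | zero => rfl
      | succ t ih =>
        have he : j + (t + 1) = (j + t) + 1 := by omega
        rw [he, Function.iterate_succ_apply', ih, hfx]
    have : π^[m] vp = π^[j] vp := by
      have := hstall (m - j); rwa [Nat.add_sub_cancel' hj] at this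
    rw [hmvp] at this
    exact hπvp_ne (by rw [this]; exact hfx)
  have hnondiag : ∀ j ≤ m, σ (π^[j] vp) ≠ ℓ (π^[j] vp) := by
    intro j hj h
    exact hnofix j hj (hfix _ (hiter_mem j) h)
  -- the two step lemmas
  have step_var : ∀ x ∈ S, σ x ≠ ℓ x → R x (σ x) := by
    intro x hx hne'
    left
    refine ⟨Or.inl (hMext.1 (hσM x hx)), ?_⟩
    rintro ⟨z, hz, hzeq⟩
    have h1 : z = x := (Prod.mk.injEq .. ▸ hzeq).1.symm ▸ rfl
    rw [h1] at hzeq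
    exact hne' (Prod.mk.injEq .. ▸ hzeq).2
  have step_eq : ∀ x ∈ S, R (ℓ x) x := by
    intro x hx
    right
    exact ⟨Or.inr ⟨x, hx, rfl⟩, ⟨x, hx, rfl⟩⟩
  -- direction 1 : vp → f
  have hdir1 : Relation.TransGen R vp f := by
    apply Relation.TransGen.single
    left
    constructor
    · exact Or.inl (hMext.1 hmatch)
    · rintro ⟨z, hz, hzeq⟩
      have h1 : z = vp := ((Prod.mk.injEq .. ▸ hzeq).1).symm ▸ rfl
      rw [h1] at hzeq
      have h2 : f = ℓ vp := (Prod.mk.injEq .. ▸ hzeq).2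
      exact hFFp.ne_of_mem hf (h2 ▸ hℓVp.mapsTo hvp) rfl
  -- direction 2 : f → vp
  have base : R f (π vp) := by
    have := step_eq (π vp) (hπS hvpS)
    rwa [hℓπ vp hvpS, hσvp] at this
  have two_step : ∀ x ∈ S, σ x ≠ ℓ x →
      Relation.TransGen R f x → Relation.TransGen R f (π x) := by
    intro x hx hne' hpath
    have h1 := hpath.tail (step_var x hx hne')
    have h2 : R (σ x) (π x) := by
      have := step_eq (π x) (hπS hx)
      rwa [hℓπ x hx] at this
    exact h1.tail h2
  have key : ∀ k, 1 ≤ k → k ≤ m → Relation.TransGen R f (π^[k] vp) := by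
    intro k
    induction k with
    | zero => omega
    | succ k ih =>
      intro _ hk
      rcases Nat.eq_zero_or_pos k with h | h
      · subst h
        exact Relation.TransGen.single base
      · have hpath := ih h (by omega)
        have := two_step (π^[k] vp) (hiter_mem k) (hnondiag k (by omega)) hpath
        rw [Function.iterate_succ_apply']
        exact this
  have hdir2 : Relation.TransGen R f vp := by
    have := key m hm1 le_rfl
    rwa [hmvp] at this
  exact ⟨hdir1, hdir2⟩
end

section
/- Let B_ext = ⟨V ∪ V_+, F ∪ F_+, E_ext⟩ be a bipartite graph with V, V_+, F, F_+ pairwise disjoint, let ℓ : V ∪ V_+ → F ∪ F_+ be a bijection with ℓ(V) = F and ℓ(V_+) = F_+, and suppose every variable is self-regulating, i.e., the edge (x − ℓ(x)) belongs to E_ext for every x ∈ V ∪ V_+. Let M_diag = {(x − ℓ(x)) : x ∈ V ∪ V_+} and let M = {(x − ℓ(x)) : x ∈ V}, which is a perfect matching of the induced bipartite subgraph B of B_ext on (V, F). Then for all vertices x, y ∈ V ∪ F: if y is reachable from x in the oriented graph G(B, M), then y is reachable from x in the oriented graph G(B_ext, M_diag). (For dynamical models in which each variable is self-regulating, ancestral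 relations in the causal ordering graph of the equilibrium equations are preserved under model extension.) -/
/-- Suppose `ℓ` is a natural labelling (a bijection mapping `V` onto
`F` and `V₊` onto `F₊`) and every variable is self-regulating, i.e.
`(x − ℓ x) ∈ E_ext` for every `x ∈ V ∪ V₊`. Let `M_diag` be the diagonal matching of
`B_ext` and `M` the diagonal matching on `V`, which is a perfect matching of the
induced subgraph `B` on `(V, F)`. Then reachability (ancestral relations) between
vertices of `V ∪ F` in `G(B, M)` is preserved in `G(B_ext, M_diag)`. -/
theorem selfRegulating_reach_preserved {α : Type*}
    (V Vp F Fp : Set α)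
    (hVfin : V.Finite) (hVpfin : Vp.Finite) (hFfin : F.Finite) (hFpfin : Fp.Finite)
    (hVVp : Disjoint V Vp) (hFFp : Disjoint F Fp)
    (hVF : Disjoint (V ∪ Vp) (F ∪ Fp))
    (ℓ : α → α)
    (hℓV : Set.BijOn ℓ V F) (hℓVp : Set.BijOn ℓ Vp Fp)
    (Eext : Set (α × α))
    (hE : ∀ e ∈ Eext, e.1 ∈ V ∪ Vp ∧ e.2 ∈ F ∪ Fp)
    (hself : ∀ x ∈ V ∪ Vp, (x, ℓ x) ∈ Eext) :
    IsPerfectMatching V F {e ∈ Eext | e.1 ∈ V ∧ e.2 ∈ F} (diagEdges ℓ V) ∧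
    ∀ x ∈ V ∪ F, ∀ y ∈ V ∪ F,
      Reach {e ∈ Eext | e.1 ∈ V ∧ e.2 ∈ F} (diagEdges ℓ V) x y →
      Reach Eext (diagEdges ℓ (V ∪ Vp)) x y := by
  have hVF' : ∀ z ∈ V, z ∉ F := fun z hz hzF =>
    hVF.ne_of_mem (Set.mem_union_left _ hz) (Set.mem_union_left _ hzF) rfl
  constructor
  · constructor
    · rintro e ⟨x, hx, rfl⟩
      exact ⟨hself x (Set.mem_union_left _ hx), hx, hℓV.mapsTo hx⟩
    · intro x hx
      rcases hx with hx | hx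
      · refine ⟨(x, ℓ x), ⟨⟨x, hx, rfl⟩, Or.inl rfl⟩, ?_⟩
        rintro e ⟨⟨z, hz, rfl⟩, h⟩
        simp only at h
        rcases h with rfl | h
        · rfl
        · exact absurd (h ▸ hℓV.mapsTo hz) (hVF' x hx)
      · obtain ⟨z, hz, rfl⟩ := hℓV.surjOn hx
        refine ⟨(z, ℓ z), ⟨⟨z, hz, rfl⟩, Or.inr rfl⟩, ?_⟩
        rintro e ⟨⟨w, hw, rfl⟩, h⟩
        simp only at h
        rcases h with h | h
        · exact absurd (h ▸ hℓV.mapsTo hz) (hVF' w (h ▸ hw))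
        · rw [hℓV.injOn hw hz h]
  · intro x hx y hy hr
    refine Relation.ReflTransGen.mono ?_ x y hr
    intro a b hab
    rcases hab with ⟨⟨hE', ha, hb⟩, hnm⟩ | ⟨⟨hE', ha, hb⟩, hm⟩
    · refine Or.inl ⟨hE', ?_⟩
      rintro ⟨z, hz, heq⟩
      have : a = z := congrArg Prod.fst heq
      subst this
      exact hnm ⟨a, ha, heq⟩
    · obtain ⟨z, hz, heq⟩ := hm
      exact Or.inr ⟨hE', z, Set.mem_union_left _ hz, heq⟩
end
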